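/- The number variance is an ensemble U(1)-frameness monotone: Let p : ℤ → ℝ be a standard-form weight distribution. For a finitely supported r : ℤ → ℝ define the mean m(r) = ∑' n, (n : ℝ) · r n and the variance Var(r) = ∑' n, (n : ℝ)² · r n − (m(r))². Let (k_μ, c_μ)_{μ ∈ ℕ} be a trace-preserving U(1)-invariant Kraus family: c μ n ≥ 0 and ∑' μ, (c μ n)² = 1 for every n ∈ ℤ. Set w μ := ∑' n, (c μ n)² · p n, and for each μ with w μ > 0 define the posterior weight distribution q_μ : ℤ → ℝ by q_μ m = (c μ (m − k μ))² · p (m − k μ) / (w μ). Then ∑' μ, w μ · Var(q_μ) ≤ Var(p), where terms with w μ = 0 contribute 0. -/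

import Mathlib

/-- The mean of the number distribution `r : ℤ → ℝ`. -/
noncomputable def numberMean (r : ℤ → ℝ) : ℝ := ∑' n : ℤ, (n : ℝ) * r n

/-- The variance of the number distribution `r : ℤ → ℝ`. -/
noncomputable def numberVar (r : ℤ → ℝ) : ℝ :=
  (∑' n : ℤ, (n : ℝ) ^ 2 * r n) - (numberMean r) ^ 2

/-- Auxiliary: variance of a shifted, rescaled finitely supported weight function. -/
lemma u1_aux_var (f : ℤ → ℝ) (hf0 : ∀ n, 0 ≤ f n) (F : Finset ℤ)
    (hsupp : ∀ n ∉ F, f n = 0) (k : ℤ) :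
    (∑ n ∈ F, f n) * numberVar (fun t => f (t - k) / (∑ n ∈ F, f n))
      = (∑ n ∈ F, (n : ℝ) ^ 2 * f n)
        - (∑ n ∈ F, (n : ℝ) * f n) ^ 2 / (∑ n ∈ F, f n) := by
  classical
  rcases eq_or_lt_of_le (Finset.sum_nonneg fun n _ => hf0 n) with h0 | hpos
  · have hz : ∀ n ∈ F, f n = 0 :=
      (Finset.sum_eq_zero_iff_of_nonneg fun n _ => hf0 n).mp h0.symm
    have hs : (∑ n ∈ F, (n : ℝ) ^ 2 * f n) = 0 :=
      Finset.sum_eq_zero fun n hn => by rw [hz n hn, mul_zero]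
    have hm : (∑ n ∈ F, (n : ℝ) * f n) = 0 :=
      Finset.sum_eq_zero fun n hn => by rw [hz n hn, mul_zero]
    rw [← h0, hs, hm]
    simp
  · set W := ∑ n ∈ F, f n with hW
    have hWne : W ≠ 0 := ne_of_gt hpos
    have hG : ∀ t : ℤ, t ∉ F.image (· + k) → f (t - k) / W = 0 := by
      intro t ht
      have h : t - k ∉ F := fun h => ht (Finset.mem_image.mpr ⟨t - k, h, by omega⟩)
      rw [hsupp _ h, zero_div]
    have hinj : ∀ a ∈ F, ∀ b ∈ F, a + k = b + k → a = b := by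
      intro a _ b _ h; omega
    have hmean : (∑' t : ℤ, (t : ℝ) * (f (t - k) / W))
        = ((∑ n ∈ F, (n : ℝ) * f n) + (k : ℝ) * W) / W := by
      rw [tsum_eq_sum (s := F.image (· + k)) (fun t ht => by rw [hG t ht, mul_zero]),
        Finset.sum_image hinj]
      have h1 : ∀ n ∈ F, ((n + k : ℤ) : ℝ) * (f ((n + k) - k) / W)
          = ((n : ℝ) * f n + (k : ℝ) * f n) / W := by
        intro n _
        have h2 : (n + k) - k = n := by ring
        rw [h2]; push_cast; ring
      rw [Finset.sum_congr rfl h1, ← Finset.sum_div, Finset.sum_add_distrib,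
        ← Finset.mul_sum]
    have hsq : (∑' t : ℤ, (t : ℝ) ^ 2 * (f (t - k) / W))
        = ((∑ n ∈ F, (n : ℝ) ^ 2 * f n) + 2 * (k : ℝ) * (∑ n ∈ F, (n : ℝ) * f n)
            + (k : ℝ) ^ 2 * W) / W := by
      rw [tsum_eq_sum (s := F.image (· + k)) (fun t ht => by rw [hG t ht, mul_zero]),
        Finset.sum_image hinj]
      have h1 : ∀ n ∈ F, ((n + k : ℤ) : ℝ) ^ 2 * (f ((n + k) - k) / W)
          = ((n : ℝ) ^ 2 * f n + 2 * (k : ℝ) * ((n : ℝ) * f n) + (k : ℝ) ^ 2 * f n) / W := by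
        intro n _
        have h2 : (n + k) - k = n := by ring
        rw [h2]; push_cast; ring
      rw [Finset.sum_congr rfl h1, ← Finset.sum_div, Finset.sum_add_distrib,
        Finset.sum_add_distrib, ← Finset.mul_sum, ← Finset.mul_sum]
    simp only [numberVar, numberMean]
    rw [hsq, hmean]
    field_simp
    ring

/-- **The number variance is an ensemble U(1)-frameness monotone.**
For a trace-preserving U(1)-invariant Kraus family `(k μ, c μ)` acting on the
standard-form pure state with weights `p`, the average posterior variance (outcome
`μ` having probability `w μ = ∑' n, (c μ n)² * p n` and posterior weights
`m ↦ (c μ (m - k μ))² * p (m - k μ) / w μ`) is at most the variance of `p`.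
(Terms with `w μ = 0` contribute `0`.) -/
theorem u1_variance_ensemble_monotone
    (p : ℤ → ℝ)
    (hp0 : ∀ n, 0 ≤ p n) (hpneg : ∀ n < 0, p n = 0)
    (hpfin : (Function.support p).Finite) (hpsum : ∑' n, p n = 1)
    (k : ℕ → ℤ) (c : ℕ → ℤ → ℝ) (hc0 : ∀ μ n, 0 ≤ c μ n)
    (htp : ∀ n, ∑' μ, (c μ n) ^ 2 = 1) :
    ∑' μ, (∑' n, (c μ n) ^ 2 * p n) *
        numberVar (fun m =>
          (c μ (m - k μ)) ^ 2 * p (m - k μ) / (∑' n, (c μ n) ^ 2 * p n))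
      ≤ numberVar p := by
  classical
  set F : Finset ℤ := hpfin.toFinset with hFdef
  have hF : ∀ n, n ∉ F → p n = 0 := by
    intro n hn
    by_contra h
    exact hn (hpfin.mem_toFinset.mpr h)
  have hrF : ∀ μ, ∀ n, n ∉ F → (c μ n) ^ 2 * p n = 0 := by
    intro μ n hn; rw [hF n hn, mul_zero]
  have hr0 : ∀ μ n, (0 : ℝ) ≤ (c μ n) ^ 2 * p n :=
    fun μ n => mul_nonneg (sq_nonneg _) (hp0 n)
  set w : ℕ → ℝ := fun μ => ∑ n ∈ F, (c μ n) ^ 2 * p n with hwdef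
  set s : ℕ → ℝ := fun μ => ∑ n ∈ F, (n : ℝ) ^ 2 * ((c μ n) ^ 2 * p n) with hsdef
  set m : ℕ → ℝ := fun μ => ∑ n ∈ F, (n : ℝ) * ((c μ n) ^ 2 * p n) with hmdef
  set g : ℕ → ℝ := fun μ => (m μ) ^ 2 / w μ with hgdef
  have hwt : ∀ μ, (∑' n, (c μ n) ^ 2 * p n) = w μ :=
    fun μ => tsum_eq_sum (fun n hn => hrF μ n hn)
  have hw0 : ∀ μ, 0 ≤ w μ := fun μ => Finset.sum_nonneg fun n _ => hr0 μ n
  have hFnn : ∀ n ∈ F, (0 : ℝ) ≤ (n : ℝ) := by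
    intro n hn
    have hpn : p n ≠ 0 := hpfin.mem_toFinset.mp hn
    have : (0 : ℤ) ≤ n := le_of_not_gt fun h => hpn (hpneg n h)
    exact_mod_cast this
  have hs0 : ∀ μ, 0 ≤ s μ :=
    fun μ => Finset.sum_nonneg fun n _ => mul_nonneg (sq_nonneg _) (hr0 μ n)
  have hm0 : ∀ μ, 0 ≤ m μ :=
    fun μ => Finset.sum_nonneg fun n hn => mul_nonneg (hFnn n hn) (hr0 μ n)
  have hg0 : ∀ μ, 0 ≤ g μ := fun μ => div_nonneg (sq_nonneg _) (hw0 μ)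
  -- the per-outcome identity
  have hkey : ∀ μ, (∑' n, (c μ n) ^ 2 * p n) *
      numberVar (fun t =>
        (c μ (t - k μ)) ^ 2 * p (t - k μ) / (∑' n, (c μ n) ^ 2 * p n))
      = s μ - (m μ) ^ 2 / w μ := by
    intro μ
    rw [hwt μ]
    exact u1_aux_var (fun n => (c μ n) ^ 2 * p n) (hr0 μ) F (hrF μ) (k μ)
  -- summability facts
  have hcs : ∀ n : ℤ, Summable fun μ => (c μ n) ^ 2 := by
    intro n
    by_contra h
    have := htp n
    rw [tsum_eq_zero_of_not_summable h] at this
    norm_num at this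
  have hrs : ∀ n : ℤ, Summable fun μ => (c μ n) ^ 2 * p n :=
    fun n => (hcs n).mul_right (p n)
  have hws : Summable w := summable_sum fun n _ => hrs n
  have hss : Summable s := summable_sum fun n _ => (hrs n).mul_left ((n : ℝ) ^ 2)
  have hms : Summable m := summable_sum fun n _ => (hrs n).mul_left ((n : ℝ))
  have hrt : ∀ n : ℤ, (∑' μ, (c μ n) ^ 2 * p n) = p n := by
    intro n
    rw [(hcs n).tsum_mul_right, htp n, one_mul]
  have hwsum : ∑' μ, w μ = 1 := by
    rw [hwdef, Summable.tsum_finsetSum (fun n _ => hrs n), Finset.sum_congr rfl fun n _ => hrt n,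
      ← tsum_eq_sum (L := SummationFilter.unconditional ℤ) (fun n hn => hF n hn), hpsum]
  have hssum : ∑' μ, s μ = ∑ n ∈ F, (n : ℝ) ^ 2 * p n := by
    rw [hsdef, Summable.tsum_finsetSum (fun n _ => (hrs n).mul_left ((n : ℝ) ^ 2))]
    refine Finset.sum_congr rfl fun n _ => ?_
    rw [(hrs n).tsum_mul_left, hrt n]
  have hmsum : ∑' μ, m μ = ∑ n ∈ F, (n : ℝ) * p n := by
    rw [hmdef, Summable.tsum_finsetSum (fun n _ => (hrs n).mul_left ((n : ℝ)))]
    refine Finset.sum_congr rfl fun n _ => ?_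
    rw [(hrs n).tsum_mul_left, hrt n]
  have hvarp : numberVar p
      = (∑ n ∈ F, (n : ℝ) ^ 2 * p n) - (∑ n ∈ F, (n : ℝ) * p n) ^ 2 := by
    simp only [numberVar, numberMean]
    rw [tsum_eq_sum (s := F) (fun n hn => by rw [hF n hn, mul_zero]),
      tsum_eq_sum (s := F) (fun n hn => by rw [hF n hn, mul_zero])]
  -- when w μ = 0
  have hwzero : ∀ μ, w μ = 0 → m μ = 0 := by
    intro μ h
    have hz := (Finset.sum_eq_zero_iff_of_nonneg fun n _ => hr0 μ n).mp h
    exact Finset.sum_eq_zero fun n hn => by rw [hz n hn, mul_zero]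
  -- per-outcome Cauchy-Schwarz: m² ≤ s * w
  have hCS : ∀ μ, (m μ) ^ 2 ≤ s μ * w μ := by
    intro μ
    have h1 : ∀ n ∈ F, ((n : ℝ) * Real.sqrt ((c μ n) ^ 2 * p n))
        * Real.sqrt ((c μ n) ^ 2 * p n) = (n : ℝ) * ((c μ n) ^ 2 * p n) := fun n _ => by
      rw [mul_assoc, Real.mul_self_sqrt (hr0 μ n)]
    have h2 : ∀ n ∈ F, ((n : ℝ) * Real.sqrt ((c μ n) ^ 2 * p n)) ^ 2
        = (n : ℝ) ^ 2 * ((c μ n) ^ 2 * p n) := fun n _ => by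
      rw [mul_pow, Real.sq_sqrt (hr0 μ n)]
    have h3 : ∀ n ∈ F, (Real.sqrt ((c μ n) ^ 2 * p n)) ^ 2
        = (c μ n) ^ 2 * p n := fun n _ => Real.sq_sqrt (hr0 μ n)
    calc (m μ) ^ 2
        = (∑ n ∈ F, ((n : ℝ) * Real.sqrt ((c μ n) ^ 2 * p n))
            * Real.sqrt ((c μ n) ^ 2 * p n)) ^ 2 := by
          rw [Finset.sum_congr rfl h1]
      _ ≤ (∑ n ∈ F, ((n : ℝ) * Real.sqrt ((c μ n) ^ 2 * p n)) ^ 2)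
            * ∑ n ∈ F, (Real.sqrt ((c μ n) ^ 2 * p n)) ^ 2 :=
          Finset.sum_mul_sq_le_sq_mul_sq F _ _
      _ = s μ * w μ := by rw [Finset.sum_congr rfl h2, Finset.sum_congr rfl h3]
  have hgs : ∀ μ, g μ ≤ s μ := by
    intro μ
    rcases eq_or_lt_of_le (hw0 μ) with h0 | h
    · have : m μ = 0 := hwzero μ h0.symm
      simp only [hgdef, this]
      simpa using hs0 μ
    · exact (div_le_iff₀ h).mpr (hCS μ)
  have hgsum : Summable g := Summable.of_nonneg_of_le hg0 hgs hss
  -- m μ = √(w μ) * √(g μ)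
  have hmeq : ∀ μ, m μ = Real.sqrt (w μ) * Real.sqrt (g μ) := by
    intro μ
    rcases eq_or_lt_of_le (hw0 μ) with h0 | h
    · rw [hwzero μ h0.symm, ← h0]
      simp
    · have hwg : w μ * g μ = (m μ) ^ 2 := by
        rw [hgdef]
        field_simp
      rw [← Real.sqrt_mul (hw0 μ), hwg, Real.sqrt_sq (hm0 μ)]
  -- Cauchy-Schwarz over outcomes: M² ≤ ∑' g
  have hgts : 0 ≤ ∑' μ, g μ := tsum_nonneg hg0
  have hMg : (∑ n ∈ F, (n : ℝ) * p n) ^ 2 ≤ ∑' μ, g μ := by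
    have hMle : (∑ n ∈ F, (n : ℝ) * p n) ≤ Real.sqrt (∑' μ, g μ) := by
      rw [← hmsum]
      refine hms.tsum_le_of_sum_le fun S => ?_
      have hkey2 : (∑ μ ∈ S, m μ) ^ 2 ≤ (∑ μ ∈ S, w μ) * (∑ μ ∈ S, g μ) := by
        calc (∑ μ ∈ S, m μ) ^ 2
            = (∑ μ ∈ S, Real.sqrt (w μ) * Real.sqrt (g μ)) ^ 2 := by
              rw [Finset.sum_congr rfl fun μ _ => hmeq μ]
          _ ≤ (∑ μ ∈ S, (Real.sqrt (w μ)) ^ 2) * ∑ μ ∈ S, (Real.sqrt (g μ)) ^ 2 :=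
              Finset.sum_mul_sq_le_sq_mul_sq S _ _
          _ = (∑ μ ∈ S, w μ) * (∑ μ ∈ S, g μ) := by
              rw [Finset.sum_congr rfl fun μ _ => Real.sq_sqrt (hw0 μ),
                Finset.sum_congr rfl fun μ _ => Real.sq_sqrt (hg0 μ)]
      have h1 : (∑ μ ∈ S, w μ) ≤ 1 := by
        rw [← hwsum]; exact Summable.sum_le_tsum S (fun μ _ => hw0 μ) hws
      have h2 : (∑ μ ∈ S, g μ) ≤ ∑' μ, g μ := Summable.sum_le_tsum S (fun μ _ => hg0 μ) hgsum
      have h3 : (∑ μ ∈ S, m μ) ^ 2 ≤ ∑' μ, g μ := by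
        have hgS : 0 ≤ ∑ μ ∈ S, g μ := Finset.sum_nonneg fun μ _ => hg0 μ
        nlinarith
      exact (Real.le_sqrt (Finset.sum_nonneg fun μ _ => hm0 μ) hgts).mpr h3
    have hMnn : 0 ≤ ∑ n ∈ F, (n : ℝ) * p n :=
      Finset.sum_nonneg fun n hn => mul_nonneg (hFnn n hn) (hp0 n)
    calc (∑ n ∈ F, (n : ℝ) * p n) ^ 2
        ≤ (Real.sqrt (∑' μ, g μ)) ^ 2 := pow_le_pow_left₀ hMnn hMle 2
      _ = ∑' μ, g μ := Real.sq_sqrt hgts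
  -- assemble
  calc ∑' μ, (∑' n, (c μ n) ^ 2 * p n) *
        numberVar (fun t =>
          (c μ (t - k μ)) ^ 2 * p (t - k μ) / (∑' n, (c μ n) ^ 2 * p n))
      = ∑' μ, (s μ - g μ) := tsum_congr fun μ => hkey μ
    _ = (∑' μ, s μ) - ∑' μ, g μ := hss.tsum_sub hgsum
    _ = (∑ n ∈ F, (n : ℝ) ^ 2 * p n) - ∑' μ, g μ := by rw [hssum]
    _ ≤ (∑ n ∈ F, (n : ℝ) ^ 2 * p n) - (∑ n ∈ F, (n : ℝ) * p n) ^ 2 := by linarith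
    _ = numberVar p := hvarp.symm
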